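/- Let v > 0, let 0 < a < v, let g : ℝ → ℝ be given by g(x) = (2/π) · sin²(a x / 2)/(a x²) for x ≠ 0 and g(0) = a/(2π), and let h : ℝ → ℝ be integrable on (0, ∞). Then for every λ ∈ ℝ with |λ| ≥ 1, ∫_{ℝ × (0,∞)} g(x) h(z) e^{-λ² v z} e^{-i λ v x} dx dz = 0; that is, the infinite-length hull f(x,z) = g(x) h(z) has zero Michell wave resistance at Kelvin wave number v. -/

import Mathlib

open Complex Real MeasureTheory Set

open FourierTransform

/-- The Fejér-type kernel of parameter `a`, extended by continuity at `0`. -/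
noncomputable def fejerKernel (a : ℝ) (x : ℝ) : ℝ :=
  if x = 0 then a / (2 * Real.pi)
  else (2 / Real.pi) * (Real.sin (a * x / 2))^2 / (a * x^2)

noncomputable def triC (a : ℝ) : ℝ → ℂ := fun t => ((max 0 (1 - |t|/a) : ℝ) : ℂ)

lemma triC_cont (a : ℝ) : Continuous (triC a) :=
  Complex.continuous_ofReal.comp
    (continuous_const.max (continuous_const.sub (continuous_abs.div_const a)))

lemma triC_eq_zero {a t : ℝ} (ha : 0 < a) (h : a ≤ |t|) : triC a t = 0 := by
  have : 1 - |t|/a ≤ 0 := by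
    have : (1:ℝ) ≤ |t|/a := (one_le_div ha).2 h
    linarith
  simp [triC, max_eq_left this]

lemma triC_support (a : ℝ) (ha : 0 < a) : Function.support (triC a) ⊆ Ioc (-a) a := by
  intro t ht
  rcases lt_or_ge (|t|) a with h | h
  · rcases abs_lt.1 h with ⟨h1, h2⟩
    exact ⟨h1, h2.le⟩
  · exact absurd (triC_eq_zero ha h) ht

lemma hasDerivAt_linexp (c₁ c₂ : ℂ) (b t : ℝ) :
    HasDerivAt (fun s : ℝ => (c₁ + c₂ * s) * Complex.exp (-((b:ℂ) * s) * Complex.I))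
      (c₂ * Complex.exp (-((b:ℂ)*t)*Complex.I)
        + (c₁ + c₂*t) * (Complex.exp (-((b:ℂ)*t)*Complex.I) * (-(b:ℂ)*Complex.I))) t := by
  have h1 : HasDerivAt (fun s : ℝ => ((s : ℂ))) 1 t := (hasDerivAt_id t).ofReal_comp
  have hu : HasDerivAt (fun s : ℝ => c₁ + c₂ * (s:ℂ)) c₂ t := by
    simpa using ((h1.const_mul c₂).const_add c₁)
  have hin : HasDerivAt (fun s : ℝ => -((b:ℂ) * s) * Complex.I) (-(b:ℂ)*Complex.I) t := by
    simpa using ((h1.const_mul (b:ℂ)).neg.mul_const Complex.I)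
  have he := hin.cexp
  exact hu.mul he

lemma tri_pieces (a b : ℝ) (ha : a ≠ 0) (hb : b ≠ 0) :
    ((∫ t in (-a:ℝ)..0, ((1:ℂ) + (t:ℂ)/(a:ℂ)) * Complex.exp (-((b:ℂ)*(t:ℂ))*Complex.I)) +
     (∫ t in (0:ℝ)..a, ((1:ℂ) - (t:ℂ)/(a:ℂ)) * Complex.exp (-((b:ℂ)*(t:ℂ))*Complex.I)))
    = (2 - (Complex.exp (((a*b:ℝ):ℂ)*Complex.I) + Complex.exp (-((a*b:ℝ):ℂ)*Complex.I)))
        / ((a:ℂ) * (b:ℂ)^2) := by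
  have haC : (a:ℂ) ≠ 0 := Complex.ofReal_ne_zero.2 ha
  have hbC : (b:ℂ) ≠ 0 := Complex.ofReal_ne_zero.2 hb
  have hab : (a:ℂ) * (b:ℂ)^2 ≠ 0 := mul_ne_zero haC (pow_ne_zero 2 hbC)
  have hcontexp : Continuous (fun s : ℝ => Complex.exp (-((b:ℂ)*s)*Complex.I)) := by
    apply Complex.continuous_exp.comp
    fun_prop
  -- rewrite integrands with cleared denominators
  have hr1 : ∀ t : ℝ, ((1:ℂ) + (t:ℂ)/(a:ℂ)) * Complex.exp (-((b:ℂ)*(t:ℂ))*Complex.I)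
      = (((a:ℂ)*(b:ℂ)^2 + (b:ℂ)^2*(t:ℂ)) * Complex.exp (-((b:ℂ)*(t:ℂ))*Complex.I))
          / ((a:ℂ) * (b:ℂ)^2) := by
    intro t
    field_simp
  have hr2 : ∀ t : ℝ, ((1:ℂ) - (t:ℂ)/(a:ℂ)) * Complex.exp (-((b:ℂ)*(t:ℂ))*Complex.I)
      = (((a:ℂ)*(b:ℂ)^2 - (b:ℂ)^2*(t:ℂ)) * Complex.exp (-((b:ℂ)*(t:ℂ))*Complex.I))
          / ((a:ℂ) * (b:ℂ)^2) := by
    intro t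
    field_simp
  simp_rw [hr1, hr2, intervalIntegral.integral_div]
  have hd1 : ∀ t ∈ uIcc (-a) (0:ℝ),
      HasDerivAt (fun s : ℝ => (((a:ℂ)*(b:ℂ)*Complex.I + 1) + ((b:ℂ)*Complex.I) * s)
          * Complex.exp (-((b:ℂ)*s)*Complex.I))
        ((((a:ℂ)*(b:ℂ)^2 + (b:ℂ)^2*(t:ℂ)) * Complex.exp (-((b:ℂ)*(t:ℂ))*Complex.I))) t := by
    intro t _
    convert hasDerivAt_linexp ((a:ℂ)*(b:ℂ)*Complex.I + 1) ((b:ℂ)*Complex.I) b t using 1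
    linear_combination (((a:ℂ)*(b:ℂ)^2 + (b:ℂ)^2*(t:ℂ))
      * Complex.exp (-((b:ℂ)*(t:ℂ))*Complex.I)) * Complex.I_sq
  have hd2 : ∀ t ∈ uIcc (0:ℝ) a,
      HasDerivAt (fun s : ℝ => ((-1 + (a:ℂ)*(b:ℂ)*Complex.I) + (-((b:ℂ)*Complex.I)) * s)
          * Complex.exp (-((b:ℂ)*s)*Complex.I))
        ((((a:ℂ)*(b:ℂ)^2 - (b:ℂ)^2*(t:ℂ)) * Complex.exp (-((b:ℂ)*(t:ℂ))*Complex.I))) t := by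
    intro t _
    convert hasDerivAt_linexp (-1 + (a:ℂ)*(b:ℂ)*Complex.I) (-((b:ℂ)*Complex.I)) b t using 1
    linear_combination (((a:ℂ)*(b:ℂ)^2 - (b:ℂ)^2*(t:ℂ))
      * Complex.exp (-((b:ℂ)*(t:ℂ))*Complex.I)) * Complex.I_sq
  have hi1 : IntervalIntegrable (fun t : ℝ => ((a:ℂ)*(b:ℂ)^2 + (b:ℂ)^2*(t:ℂ))
      * Complex.exp (-((b:ℂ)*(t:ℂ))*Complex.I)) volume (-a) 0 :=
    (Continuous.intervalIntegrable (Continuous.mul (by fun_prop) hcontexp) _ _)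
  have hi2 : IntervalIntegrable (fun t : ℝ => ((a:ℂ)*(b:ℂ)^2 - (b:ℂ)^2*(t:ℂ))
      * Complex.exp (-((b:ℂ)*(t:ℂ))*Complex.I)) volume 0 a :=
    (Continuous.intervalIntegrable (Continuous.mul (by fun_prop) hcontexp) _ _)
  rw [intervalIntegral.integral_eq_sub_of_hasDerivAt hd1 hi1,
      intervalIntegral.integral_eq_sub_of_hasDerivAt hd2 hi2]
  have hE1 : Complex.exp (-((b:ℂ)*((-a:ℝ):ℂ))*Complex.I) = Complex.exp (((a*b:ℝ):ℂ)*Complex.I) := by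
    congr 1; push_cast; ring
  have hE2 : Complex.exp (-((b:ℂ)*((a:ℝ):ℂ))*Complex.I) = Complex.exp (-((a*b:ℝ):ℂ)*Complex.I) := by
    congr 1; push_cast; ring
  rw [hE1, hE2]
  rw [← add_div]
  congr 1
  simp only [Complex.ofReal_neg, Complex.ofReal_zero, mul_zero, zero_mul, neg_zero,
    Complex.exp_zero, mul_one]
  ring

lemma fourier_tri (a : ℝ) (ha : 0 < a) (ξ : ℝ) :
    𝓕 (triC a) ξ = ((2 * π * fejerKernel a (2 * π * ξ) : ℝ) : ℂ) := by
  have ha0 : a ≠ 0 := ha.ne'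
  rw [Real.fourier_real_eq_integral_exp_smul]
  have hcont : Continuous (fun v : ℝ => Complex.exp (((-2*π*v*ξ :ℝ):ℂ) * Complex.I) • triC a v) := by
    apply Continuous.fun_smul _ (triC_cont a)
    exact Complex.continuous_exp.comp
      ((Complex.continuous_ofReal.comp (by continuity)).mul continuous_const)
  have hsupp : Function.support (fun v : ℝ => Complex.exp (((-2*π*v*ξ :ℝ):ℂ) * Complex.I) • triC a v)
      ⊆ Ioc (-a) a := by
    intro t ht
    apply triC_support a ha
    intro h0
    exact ht (by simp [h0])
  rw [← intervalIntegral.integral_eq_integral_of_support_subset hsupp]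
  rw [← intervalIntegral.integral_add_adjacent_intervals (a := -a) (b := 0) (c := a)
    (hcont.intervalIntegrable _ _) (hcont.intervalIntegrable _ _)]
  have hm : ∫ t in (-a:ℝ)..0, Complex.exp (((-2*π*t*ξ :ℝ):ℂ) * Complex.I) • triC a t
      = ∫ t in (-a:ℝ)..0, ((1:ℂ) + (t:ℂ)/(a:ℂ)) * Complex.exp (((-2*π*t*ξ :ℝ):ℂ) * Complex.I) := by
    apply intervalIntegral.integral_congr
    intro t htt
    rw [uIcc_of_le (by linarith)] at htt
    have h1 : |t| = -t := abs_of_nonpos htt.2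
    have h2 : (0:ℝ) ≤ 1 - |t|/a := by
      rw [h1]
      have : -t ≤ a := by linarith [htt.1]
      have := div_le_one_of_le₀ this ha.le
      linarith
    have h3 : triC a t = ((1 + t/a : ℝ) : ℂ) := by
      unfold triC
      congr 1
      rw [max_eq_right h2, h1]
      ring
    simp only []
    rw [h3, smul_eq_mul]
    push_cast
    ring
  have hp : ∫ t in (0:ℝ)..a, Complex.exp (((-2*π*t*ξ :ℝ):ℂ) * Complex.I) • triC a t
      = ∫ t in (0:ℝ)..a, ((1:ℂ) - (t:ℂ)/(a:ℂ)) * Complex.exp (((-2*π*t*ξ :ℝ):ℂ) * Complex.I) := by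
    apply intervalIntegral.integral_congr
    intro t htt
    rw [uIcc_of_le ha.le] at htt
    have h1 : |t| = t := abs_of_nonneg htt.1
    have h2 : (0:ℝ) ≤ 1 - |t|/a := by
      rw [h1]
      have := div_le_one_of_le₀ htt.2 ha.le
      linarith
    have h3 : triC a t = ((1 - t/a : ℝ) : ℂ) := by
      unfold triC
      congr 1
      rw [max_eq_right h2, h1]
    simp only []
    rw [h3, smul_eq_mul]
    push_cast
    ring
  rw [hm, hp]
  by_cases hξ : ξ = 0
  · subst hξ
    simp only [mul_zero, Complex.ofReal_zero, zero_mul, Complex.exp_zero, mul_one]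
    have haC : (a:ℂ) ≠ 0 := Complex.ofReal_ne_zero.2 ha0
    have hid : ∀ t : ℝ, HasDerivAt (fun s : ℝ => ((s:ℂ))) 1 t := by
      intro t
      exact (hasDerivAt_id t).ofReal_comp
    have hsq : ∀ t : ℝ, HasDerivAt (fun s : ℝ => ((s:ℂ))*((s:ℂ))) (2*(t:ℂ)) t := by
      intro t
      have := (hid t).fun_mul (hid t)
      convert this using 1
      · rfl
      ring
    have hd1 : ∀ t ∈ uIcc (-a) (0:ℝ), HasDerivAt (fun s : ℝ => ((s:ℂ)) + ((s:ℂ))*((s:ℂ))/(2*a))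
        ((1:ℂ) + (t:ℂ)/(a:ℂ)) t := by
      intro t _
      have := (hid t).fun_add ((hsq t).div_const (2*(a:ℂ)))
      convert this using 1
      · rfl
      field_simp
    have hd2 : ∀ t ∈ uIcc (0:ℝ) a, HasDerivAt (fun s : ℝ => ((s:ℂ)) - ((s:ℂ))*((s:ℂ))/(2*a))
        ((1:ℂ) - (t:ℂ)/(a:ℂ)) t := by
      intro t _
      have := (hid t).fun_sub ((hsq t).div_const (2*(a:ℂ)))
      convert this using 1
      · rfl
      field_simp
    have hi1 : IntervalIntegrable (fun t : ℝ => (1:ℂ) + (t:ℂ)/(a:ℂ)) volume (-a) 0 :=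
      (Continuous.intervalIntegrable (by fun_prop) _ _)
    have hi2 : IntervalIntegrable (fun t : ℝ => (1:ℂ) - (t:ℂ)/(a:ℂ)) volume 0 a :=
      (Continuous.intervalIntegrable (by fun_prop) _ _)
    rw [intervalIntegral.integral_eq_sub_of_hasDerivAt hd1 hi1,
        intervalIntegral.integral_eq_sub_of_hasDerivAt hd2 hi2]
    rw [fejerKernel, if_pos rfl]
    have hπ : (π:ℂ) ≠ 0 := Complex.ofReal_ne_zero.2 Real.pi_ne_zero
    push_cast
    field_simp
    ring
  · have hb : (2*π*ξ) ≠ 0 := mul_ne_zero (mul_ne_zero two_ne_zero Real.pi_ne_zero) hξ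
    have haC : (a:ℂ) ≠ 0 := Complex.ofReal_ne_zero.2 ha0
    have he : ∀ t:ℝ, ((-2*π*t*ξ :ℝ):ℂ) * Complex.I = -(((2*π*ξ:ℝ):ℂ)*(t:ℂ))*Complex.I := by
      intro t; push_cast; ring
    simp_rw [he]
    rw [tri_pieces a (2*π*ξ) ha0 hb]
    rw [fejerKernel, if_neg hb]
    have hcos : ((Real.cos (a*(2*π*ξ)) : ℝ):ℂ)
        = (Complex.exp (((a*(2*π*ξ):ℝ):ℂ)*Complex.I)
            + Complex.exp (-((a*(2*π*ξ):ℝ):ℂ)*Complex.I))/2 := by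
      rw [Complex.ofReal_cos, ← Complex.two_cos]
      ring
    have hsin : Real.sin (a*(2*π*ξ)/2)^2 = 1/2 - Real.cos (a*(2*π*ξ))/2 := by
      have := Real.sin_sq_eq_half_sub (x := a*(2*π*ξ)/2)
      rwa [show 2*(a*(2*π*ξ)/2) = a*(2*π*ξ) by ring] at this
    have hπ : (π:ℂ) ≠ 0 := Complex.ofReal_ne_zero.2 Real.pi_ne_zero
    have hbC : ((2*π*ξ:ℝ):ℂ) ≠ 0 := Complex.ofReal_ne_zero.2 hb
    rw [hsin]
    have hreal : 2*π * ((2/π) * (1/2 - Real.cos (a*(2*π*ξ))/2) / (a*(2*π*ξ)^2))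
        = (2 - 2*Real.cos (a*(2*π*ξ))) / (a*(2*π*ξ)^2) := by
      have hπ := Real.pi_ne_zero
      field_simp
    rw [hreal]
    push_cast [-Complex.ofReal_cos] at hcos ⊢
    rw [hcos]
    congr 1
    ring

lemma fejer_meas (a : ℝ) : Measurable (fejerKernel a) := by
  unfold fejerKernel
  refine Measurable.ite (measurableSet_eq) measurable_const ?_
  exact ((continuous_const.mul ((Real.continuous_sin.comp
      ((continuous_const.mul continuous_id).div_const 2)).pow 2)).measurable).div
    ((continuous_const.mul (continuous_pow 2)).measurable)

lemma fejer_nonneg {a : ℝ} (ha : 0 < a) (x : ℝ) : 0 ≤ fejerKernel a x := by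
  unfold fejerKernel
  split_ifs
  · positivity
  · positivity

lemma fejer_le {a : ℝ} (ha : 0 < a) (x : ℝ) : fejerKernel a x ≤ a / (2*π) := by
  unfold fejerKernel
  split_ifs with hx
  · exact le_refl _
  · have hx2 : 0 < x^2 := by positivity
    have hs : Real.sin (a*x/2)^2 ≤ (a*x/2)^2 := Real.sin_sq_le_sq
    have h1 : (2/π) * Real.sin (a*x/2)^2 / (a*x^2) ≤ (2/π) * (a*x/2)^2 / (a*x^2) := by
      apply div_le_div_of_nonneg_right ?_ (by positivity)
      exact mul_le_mul_of_nonneg_left hs (by positivity)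
    calc (2/π) * Real.sin (a*x/2)^2 / (a*x^2) ≤ (2/π) * (a*x/2)^2 / (a*x^2) := h1
    _ = a / (2*π) := by field_simp

lemma fejer_le' {a : ℝ} (ha : 0 < a) {x : ℝ} (hx : x ≠ 0) :
    fejerKernel a x ≤ 2/(π*a) * (x^2)⁻¹ := by
  unfold fejerKernel
  rw [if_neg hx]
  have hx2 : 0 < x^2 := by positivity
  have hs : Real.sin (a*x/2)^2 ≤ 1 := by
    rw [← Real.sin_sq_add_cos_sq (a*x/2)]
    nlinarith [sq_nonneg (Real.cos (a*x/2))]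
  calc (2/π) * Real.sin (a*x/2)^2 / (a*x^2) ≤ (2/π) * 1 / (a*x^2) := by
        apply div_le_div_of_nonneg_right ?_ (by positivity)
        exact mul_le_mul_of_nonneg_left hs (by positivity)
  _ = 2/(π*a) * (x^2)⁻¹ := by field_simp

lemma fejer_even (a : ℝ) (x : ℝ) : fejerKernel a (-x) = fejerKernel a x := by
  unfold fejerKernel
  rcases eq_or_ne x 0 with h | h
  · simp [h]
  · rw [if_neg (neg_ne_zero.2 h), if_neg h]
    rw [show a * -x / 2 = -(a*x/2) by ring, Real.sin_neg, neg_sq, neg_sq]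

lemma fejer_integrable (a : ℝ) (ha : 0 < a) : Integrable (fejerKernel a) := by
  have hmeas := (fejer_meas a).aestronglyMeasurable (μ := volume)
  have hIcc : IntegrableOn (fejerKernel a) (Icc (-1) 1) := by
    apply Measure.integrableOn_of_bounded (M := a/(2*π))
    · simp [Real.volume_Icc]
    · exact hmeas
    · filter_upwards with x
      rw [Real.norm_eq_abs, _root_.abs_of_nonneg (fejer_nonneg ha x)]
      exact fejer_le ha x
  have hIoi : IntegrableOn (fejerKernel a) (Ioi 1) := by
    have hg : IntegrableOn (fun x : ℝ => x ^ (-2:ℝ)) (Ioi 1) :=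
      integrableOn_Ioi_rpow_of_lt (by norm_num) one_pos
    apply Integrable.mono (hg.const_mul (2/(π*a))) hmeas.restrict
    rw [ae_restrict_iff' measurableSet_Ioi]
    filter_upwards with x hx
    have hx0 : (0:ℝ) < x := lt_trans one_pos hx
    have hrw : x ^ (-2:ℝ) = (x^2)⁻¹ := by
      rw [show (-2:ℝ) = -(2:ℕ) by norm_num, Real.rpow_neg hx0.le, Real.rpow_natCast]
    rw [Real.norm_eq_abs, Real.norm_eq_abs, _root_.abs_of_nonneg (fejer_nonneg ha x)]
    have h2 : 0 ≤ 2/(π*a) * x ^ (-2:ℝ) := by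
      rw [hrw]; positivity
    rw [_root_.abs_of_nonneg h2, hrw]
    exact fejer_le' ha hx0.ne'
  have hIio : IntegrableOn (fejerKernel a) (Iio (-1)) := by
    have h1 : Integrable ((Ioi (1:ℝ)).indicator (fejerKernel a)) :=
      (integrable_indicator_iff measurableSet_Ioi).2 hIoi
    have h2 : Integrable (fun x => ((Ioi (1:ℝ)).indicator (fejerKernel a)) ((-1) * x)) :=
      (integrable_comp_mul_left_iff _ (by norm_num : (-1:ℝ) ≠ 0)).2 h1
    have h3 : (fun x => ((Ioi (1:ℝ)).indicator (fejerKernel a)) ((-1)*x))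
        = (Iio (-1:ℝ)).indicator (fejerKernel a) := by
      funext x
      by_cases hx : x < -1
      · rw [indicator_of_mem (show (-1)*x ∈ Ioi (1:ℝ) by simp only [mem_Ioi]; linarith),
            indicator_of_mem (show x ∈ Iio (-1:ℝ) from hx)]
        rw [neg_one_mul, fejer_even]
      · rw [indicator_of_notMem (show (-1)*x ∉ Ioi (1:ℝ) by simp only [mem_Ioi]; push_neg; linarith [not_lt.1 hx]),
            indicator_of_notMem (by simpa using hx)]
    rw [← integrable_indicator_iff measurableSet_Iio, ← h3]
    exact h2
  have hcov : Iio (-1:ℝ) ∪ (Icc (-1) 1 ∪ Ioi 1) = (univ : Set ℝ) := by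
    ext x
    simp only [mem_union, mem_Iio, mem_Icc, mem_Ioi, mem_univ, iff_true]
    rcases lt_or_ge x (-1) with h | h
    · exact Or.inl h
    · rcases le_or_gt x 1 with h' | h'
      · exact Or.inr (Or.inl ⟨h, h'⟩)
      · exact Or.inr (Or.inr h')
  rw [← integrableOn_univ, ← hcov]
  exact hIio.union (hIcc.union hIoi)

lemma key6 (a : ℝ) (ha : 0 < a) (c : ℝ) (hc : a ≤ |c|) :
    ∫ x : ℝ, (fejerKernel a x : ℂ) * Complex.exp (-(Complex.I * c * x)) = 0 := by
  have ha0 : a ≠ 0 := ha.ne'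
  have htri_int : Integrable (triC a) := by
    apply (triC_cont a).integrable_of_hasCompactSupport
    apply HasCompactSupport.intro (isCompact_Icc (a := -a) (b := a))
    intro x hx
    apply triC_eq_zero ha
    simp only [mem_Icc, not_and_or, not_le] at hx
    rcases hx with h | h
    · rw [_root_.abs_of_nonpos (by linarith)]; linarith
    · rw [_root_.abs_of_nonneg (by linarith)]; linarith
  have hF : 𝓕 (triC a) = fun ξ => ((2 * π * fejerKernel a (2 * π * ξ) : ℝ) : ℂ) :=
    funext (fourier_tri a ha)
  have hFi : Integrable (𝓕 (triC a)) := by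
    rw [hF]
    have h1 : Integrable (fun x : ℝ => 2 * π * fejerKernel a x) :=
      (fejer_integrable a ha).const_mul _
    have h2 : Integrable (fun ξ : ℝ => 2 * π * fejerKernel a (2*π*ξ)) :=
      (integrable_comp_mul_left_iff (fun x : ℝ => 2 * π * fejerKernel a x)
        (R := 2*π) (by positivity)).2 h1
    exact h2.ofReal
  have hinv := htri_int.fourierInv_fourier_eq hFi ((triC_cont a).continuousAt (x := -c))
  rw [Real.fourierInv_eq_fourier_neg, neg_neg] at hinv
  rw [triC_eq_zero ha (by rwa [abs_neg])] at hinv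
  rw [hF, Real.fourier_real_eq_integral_exp_smul] at hinv
  have hΦ : ∀ u:ℝ, Complex.exp (((-2*π*u*c:ℝ):ℂ) * Complex.I)
        • (((2*π*fejerKernel a (2*π*u) : ℝ)):ℂ)
      = (2*π:ℝ) • ((fun x : ℝ => (fejerKernel a x : ℂ) * Complex.exp (-(Complex.I * c * x)))
          (2*π*u)) := by
    intro u
    simp only [smul_eq_mul, Complex.real_smul]
    rw [show (((-2*π*u*c:ℝ):ℂ) * Complex.I) = -(Complex.I * c * ((2*π*u:ℝ):ℂ)) by push_cast; ring]
    push_cast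
    ring
  simp_rw [hΦ] at hinv
  rw [integral_smul] at hinv
  rw [MeasureTheory.Measure.integral_comp_mul_left
    (fun x : ℝ => (fejerKernel a x : ℂ) * Complex.exp (-(Complex.I * c * x))) (2*π)] at hinv
  have hπ : (0:ℝ) < 2*π := by positivity
  rw [smul_smul] at hinv
  have hne : (2*π) * |(2*π)⁻¹| ≠ (0:ℝ) := by
    rw [_root_.abs_of_pos (by positivity : (0:ℝ) < (2*π)⁻¹)]
    positivity
  exact (smul_eq_zero.1 hinv).resolve_left hne

theorem stmt13 (v a : ℝ) (hv : 0 < v) (ha : 0 < a) (hav : a < v)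
    (h : ℝ → ℝ) (hh : IntegrableOn h (Ioi 0))
    (lam : ℝ) (hlam : 1 ≤ |lam|) :
    (∫ p in (univ : Set ℝ) ×ˢ (Ioi (0:ℝ)),
        (fejerKernel a p.1 : ℂ) * (h p.2 : ℂ) *
          Complex.exp (-(lam^2 * v * p.2 : ℝ)) *
          Complex.exp (-(Complex.I * lam * v * p.1))) = 0 := by
  have hrw : ∀ p : ℝ × ℝ,
      (fejerKernel a p.1 : ℂ) * (h p.2 : ℂ) *
          Complex.exp (-(lam^2 * v * p.2 : ℝ)) *
          Complex.exp (-(Complex.I * lam * v * p.1))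
      = ((fejerKernel a p.1 : ℂ) * Complex.exp (-(Complex.I * lam * v * p.1))) *
        ((h p.2 : ℂ) * Complex.exp (-(lam^2 * v * p.2 : ℝ))) := by
    intro p
    push_cast
    ring
  simp_rw [hrw]
  rw [Measure.volume_eq_prod,
    setIntegral_prod_mul (fun x : ℝ => (fejerKernel a x : ℂ) * Complex.exp (-(Complex.I * lam * v * x)))
      (fun z : ℝ => (h z : ℂ) * Complex.exp (-(lam^2 * v * z : ℝ))) univ (Ioi 0)]
  have h1 : (∫ x in (univ : Set ℝ),
      (fejerKernel a x : ℂ) * Complex.exp (-(Complex.I * lam * v * x))) = 0 := by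
    rw [Measure.restrict_univ]
    have := key6 a ha (lam * v) ?_
    · rw [← this]
      congr 1; funext x; congr 2; push_cast; ring
    rw [abs_mul, abs_of_pos hv]
    calc a ≤ v := le_of_lt hav
    _ = 1 * v := (one_mul v).symm
    _ ≤ |lam| * v := by nlinarith
  rw [h1, zero_mul]
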